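/- Let W: M^{d×d} → [0,∞) be C² on V = {F : dist(F, SO(d){A,B}) < δ_W} with W = 0, DW = 0 on SO(d){A,B}, coercivity W(F) ≥ c₁ dist²(F, SO(d){A,B}) on M^{d×d}, and DW Lipschitz on V. Then for 0 < δ ≤ δ_W/2 there are constants C > 0 (depending only on W) and ρ_δ > 0 with ρ_δ → 0 as δ → 0 such that W(F + G) ≤ W(F) + C √(W(F)) |G| + ½ D²W(F)[G,G] + ρ_δ |G|² for all F ∈ V_δ and G with |G| < δ, where V_δ = {F : dist(F, SO(d){A,B}) < δ}. -/

import Mathlib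

open Matrix Metric Filter Topology

attribute [local instance] Matrix.frobeniusNormedAddCommGroup Matrix.frobeniusNormedSpace

/-- The special orthogonal group `SO(d)`. -/
def SO (d : ℕ) : Set (Matrix (Fin d) (Fin d) ℝ) :=
  {R | R * Rᵀ = 1 ∧ R.det = 1}

private lemma clm2_norm_sub_le {E : Type*} [NormedAddCommGroup E] [NormedSpace ℝ E]
    (a b : E →L[ℝ] (E →L[ℝ] ℝ)) : ‖a - b‖ ≤ ‖a‖ + ‖b‖ := by exact norm_sub_le a b

private lemma clm2_dist_eq_norm {E : Type*} [NormedAddCommGroup E] [NormedSpace ℝ E]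
    (a b : E →L[ℝ] (E →L[ℝ] ℝ)) : dist a b = ‖a - b‖ := dist_eq_norm a b

private lemma clm2_norm_sub_self {E : Type*} [NormedAddCommGroup E] [NormedSpace ℝ E]
    (a : E →L[ℝ] (E →L[ℝ] ℝ)) : ‖a - a‖ = 0 := by
  exact (dist_eq_norm a a).symm.trans (dist_self a)

set_option maxHeartbeats 0 in
theorem stmt5_aux {E : Type*} [NormedAddCommGroup E] [NormedSpace ℝ E] [ProperSpace E]
    (c₁ L δW : ℝ) (hc1 : 0 < c₁) (hδW : 0 < δW)
    (K : Set E) (hKc : IsCompact K) (hKne : K.Nonempty)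
    (V : Set E) (hV : V = {F | Metric.infDist F K < δW})
    (W : E → ℝ)
    (hsmooth : ContDiffOn ℝ 2 W V)
    (hDvan : ∀ F ∈ K, fderiv ℝ W F = 0)
    (hcoer : ∀ F, c₁ * Metric.infDist F K ^ 2 ≤ W F)
    (hLip : ∀ F₁ ∈ V, ∀ F₂ ∈ V, ‖fderiv ℝ W F₁ - fderiv ℝ W F₂‖ ≤ L * ‖F₁ - F₂‖) :
    ∃ C : ℝ, 0 < C ∧ ∃ ρ : ℝ → ℝ,
      (∀ δ ∈ Set.Ioc (0 : ℝ) (δW / 2), 0 < ρ δ) ∧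
      Tendsto ρ (𝓝[>] (0 : ℝ)) (𝓝 0) ∧
      ∀ δ ∈ Set.Ioc (0 : ℝ) (δW / 2),
        ∀ F, Metric.infDist F K < δ →
          ∀ G : E, ‖G‖ < δ →
            W (F + G) ≤ W F + C * Real.sqrt (W F) * ‖G‖
              + (1 / 2) * iteratedFDeriv ℝ 2 W F ![G, G] + ρ δ * ‖G‖ ^ 2 := by
  classical
  obtain ⟨x₀, hx₀K⟩ := hKne
  set L' : ℝ := max L 0 with hL'def
  have hL'0 : 0 ≤ L' := le_max_right _ _
  have hLL' : L ≤ L' := le_max_left _ _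
  have hVopen : IsOpen V := by
    rw [hV]
    exact isOpen_lt (continuous_infDist_pt K) continuous_const
  have hmemV : ∀ x : E, Metric.infDist x K < δW → x ∈ V := fun x hx => by rwa [hV]
  have hKV : K ⊆ V := fun x hx => hmemV x (by rw [Metric.infDist_zero_of_mem hx]; exact hδW)
  have hsub : ∀ x ∈ V, V ∈ 𝓝 x := fun x hx => hVopen.mem_nhds hx
  -- derivatives
  set f : E → (E →L[ℝ] ℝ) := fderiv ℝ W with hfdef
  set B₂ : E → (E →L[ℝ] (E →L[ℝ] ℝ)) := fderiv ℝ f with hB₂def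
  have hWd : ∀ x ∈ V, HasFDerivAt W (f x) x := fun x hx =>
    ((hsmooth.differentiableOn (by norm_num)).differentiableAt (hsub x hx)).hasFDerivAt
  have hC1 : ContDiffOn ℝ 1 f V := hsmooth.fderiv_of_isOpen hVopen (by norm_num)
  have hfd : ∀ x ∈ V, HasFDerivAt f (B₂ x) x := fun x hx =>
    ((hC1.differentiableOn (by norm_num)).differentiableAt (hsub x hx)).hasFDerivAt
  have hB₂cont : ContinuousOn B₂ V :=
    (hC1.fderiv_of_isOpen (m := 0) hVopen (by norm_num)).continuousOn
  -- Lipschitz bound on B₂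
  have hlipf : LipschitzOnWith L'.toNNReal f V := by
    rw [lipschitzOnWith_iff_norm_sub_le]
    intro x hx y hy
    calc ‖f x - f y‖ ≤ L * ‖x - y‖ := hLip x hx y hy
      _ ≤ L' * ‖x - y‖ := mul_le_mul_of_nonneg_right hLL' (norm_nonneg _)
      _ = (L'.toNNReal : ℝ) * ‖x - y‖ := by rw [Real.coe_toNNReal _ hL'0]
  have hB₂bound : ∀ x ∈ V, ‖B₂ x‖ ≤ L' := by
    intro x hx
    have := (hfd x hx).le_of_lipschitzOn (hsub x hx) hlipf
    rwa [Real.coe_toNNReal _ hL'0] at this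
  -- bound on ‖f F‖ via coercivity
  have hfnorm : ∀ F ∈ V, ‖f F‖ ≤ L' * Metric.infDist F K := by
    intro F hF
    obtain ⟨P, hPK, hPd⟩ := hKc.exists_infDist_eq_dist ⟨x₀, hx₀K⟩ F
    have h := hLip F hF P (hKV hPK)
    rw [hDvan P hPK, sub_zero] at h
    calc ‖f F‖ ≤ L * ‖F - P‖ := h
      _ ≤ L' * ‖F - P‖ := mul_le_mul_of_nonneg_right hLL' (norm_nonneg _)
      _ = L' * Metric.infDist F K := by rw [hPd, dist_eq_norm]
  -- the compact set T
  set T : Set E := Metric.cthickening (δW / 2) K with hTdef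
  have hTc : IsCompact T := hKc.cthickening
  have hTd : ∀ x ∈ T, Metric.infDist x K ≤ δW / 2 := by
    intro x hx
    have h := Metric.mem_cthickening_iff.1 hx
    have h2 := ENNReal.toReal_mono (by simp) h
    rwa [ENNReal.toReal_ofReal (by positivity)] at h2
  have hTV : T ⊆ V := fun x hx => hmemV x (lt_of_le_of_lt (hTd x hx) (by linarith))
  have hTmem : ∀ x : E, Metric.infDist x K ≤ δW / 2 → x ∈ T := by
    intro x hx
    obtain ⟨P, hPK, hPd⟩ := hKc.exists_infDist_eq_dist ⟨x₀, hx₀K⟩ x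
    exact Metric.mem_cthickening_of_dist_le x P _ K hPK (by rw [← hPd]; exact hx)
  have h1T : x₀ ∈ T := Metric.self_subset_cthickening K hx₀K
  -- uniform continuity and the modulus ω
  have hUC : ∀ ε > 0, ∃ η > 0, ∀ x ∈ T, ∀ y ∈ T,
      dist x y < η → dist (B₂ x) (B₂ y) < ε :=
    Metric.uniformContinuousOn_iff.1
      (hTc.uniformContinuousOn_of_continuous (hB₂cont.mono hTV))
  set Q : ℝ → Set ℝ := fun t =>
    (fun p : E × E => ‖B₂ p.1 - B₂ p.2‖) '' {p | p.1 ∈ T ∧ p.2 ∈ T ∧ dist p.1 p.2 ≤ t}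
    with hQdef
  have hQb : ∀ t, BddAbove (Q t) := by
    intro t
    refine ⟨2 * L', fun a ha => ?_⟩
    obtain ⟨p, ⟨hp1, hp2, _⟩, rfl⟩ := ha
    have hn := clm2_norm_sub_le (B₂ p.1) (B₂ p.2)
    have hx1 := hB₂bound _ (hTV hp1)
    have hx2 := hB₂bound _ (hTV hp2)
    show ‖B₂ p.1 - B₂ p.2‖ ≤ 2 * L'
    linarith
  have hQ0 : ∀ t, 0 ≤ t → (0 : ℝ) ∈ Q t :=
    fun t ht => ⟨(x₀, x₀), ⟨h1T, h1T, by simpa using ht⟩, by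
      show ‖B₂ x₀ - B₂ x₀‖ = 0
      exact clm2_norm_sub_self _⟩
  set ω : ℝ → ℝ := fun t => sSup (Q t) with hωdef
  have hω0 : ∀ t, 0 ≤ t → 0 ≤ ω t := fun t ht => le_csSup (hQb t) (hQ0 t ht)
  have hωle : ∀ t, ∀ x ∈ T, ∀ y ∈ T, dist x y ≤ t → ‖B₂ x - B₂ y‖ ≤ ω t :=
    fun t x hx y hy hd => le_csSup (hQb t) ⟨(x, y), ⟨hx, hy, hd⟩, rfl⟩
  have hωtend : Tendsto ω (𝓝[>] (0 : ℝ)) (𝓝 0) := by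
    rw [Metric.tendsto_nhdsWithin_nhds]
    intro ε hε
    obtain ⟨η, hη, hηe⟩ := hUC (ε / 2) (by linarith)
    refine ⟨η, hη, fun t ht hd => ?_⟩
    have ht0 : 0 < t := ht
    have htη : t < η := by
      rw [Real.dist_eq] at hd
      calc t = |t| := (abs_of_pos ht0).symm
        _ = |t - 0| := by ring_nf
        _ < η := hd
    have hup : ω t ≤ ε / 2 := by
      apply csSup_le ⟨0, hQ0 t ht0.le⟩
      rintro a ⟨p, ⟨hp1, hp2, hpd⟩, rfl⟩
      have hlt := hηe p.1 hp1 p.2 hp2 (lt_of_le_of_lt hpd htη)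
      have hde : dist (B₂ p.1) (B₂ p.2) = ‖B₂ p.1 - B₂ p.2‖ := clm2_dist_eq_norm _ _
      show ‖B₂ p.1 - B₂ p.2‖ ≤ ε / 2
      rw [← hde]
      exact hlt.le
    rw [Real.dist_eq, sub_zero, abs_of_nonneg (hω0 t ht0.le)]
    linarith
  -- the constants
  refine ⟨L' / Real.sqrt c₁ + 1, by positivity,
    fun δ => (if δ ≤ δW / 4 then ω δ else 2 * L') + δ, ?_, ?_, ?_⟩
  · intro δ hδ
    have h0 : 0 ≤ (if δ ≤ δW / 4 then ω δ else 2 * L') := by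
      split
      · exact hω0 δ hδ.1.le
      · positivity
    have := hδ.1
    linarith
  · have hev : ∀ᶠ δ in 𝓝[>] (0:ℝ),
        (if δ ≤ δW / 4 then ω δ else 2 * L') + δ = ω δ + δ := by
      filter_upwards [Ioo_mem_nhdsGT_of_mem (by constructor <;> [exact le_rfl; positivity] :
        (0:ℝ) ∈ Set.Ico 0 (δW/4))] with δ hδ
      rw [if_pos hδ.2.le]
    refine Tendsto.congr' (by filter_upwards [hev] with δ h using h.symm) ?_
    have : Tendsto (fun δ : ℝ => ω δ + δ) (𝓝[>] (0:ℝ)) (𝓝 (0 + 0)) :=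
      hωtend.add (tendsto_id.mono_left nhdsWithin_le_nhds)
    simpa using this
  -- the main estimate
  intro δ hδ F hF G hG
  have hδ0 : 0 < δ := hδ.1
  have hδW2 : δ ≤ δW / 2 := hδ.2
  have hFV : F ∈ V := hmemV F (by linarith)
  set ρ' : ℝ := if δ ≤ δW / 4 then ω δ else 2 * L' with hρ'def
  have hρ'0 : 0 ≤ ρ' := by
    rw [hρ'def]; split
    · exact hω0 δ hδ0.le
    · positivity
  -- every point near F (within ‖G‖) has controlled B₂-distance to B₂ F
  have hnear : ∀ x : E, ‖x - F‖ ≤ ‖G‖ → Metric.infDist x K < 2 * δ := by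
    intro x hx
    calc Metric.infDist x K ≤ Metric.infDist F K + dist x F :=
          Metric.infDist_le_infDist_add_dist
      _ < δ + δ := by rw [dist_eq_norm]; have := lt_of_le_of_lt hx hG; linarith
      _ = 2 * δ := by ring
  have hnearV : ∀ x : E, ‖x - F‖ ≤ ‖G‖ → x ∈ V := fun x hx =>
    hmemV x (lt_of_lt_of_le (hnear x hx) (by linarith))
  have hρ' : ∀ x : E, ‖x - F‖ ≤ ‖G‖ → ‖B₂ x - B₂ F‖ ≤ ρ' := by
    intro x hx
    rw [hρ'def]
    split_ifs with h4
    · have hxT : x ∈ T := hTmem x (le_of_lt (lt_of_lt_of_le (hnear x hx) (by linarith)))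
      have hFT : F ∈ T := hTmem F (by linarith)
      exact hωle δ x hxT F hFT (by rw [dist_eq_norm]; exact hx.trans hG.le)
    · have hn := clm2_norm_sub_le (B₂ x) (B₂ F)
      have hx1 := hB₂bound _ (hnearV x hx)
      have hx2 := hB₂bound _ hFV
      linarith
  -- the segment
  set s : Set E := segment ℝ F (F + G) with hsdef
  have hseg : ∀ x ∈ s, ‖x - F‖ ≤ ‖G‖ := by
    intro x hx
    rw [hsdef, segment_eq_image'] at hx
    obtain ⟨t, ht, rfl⟩ := hx
    simp only [add_sub_cancel_left]
    rw [norm_smul, Real.norm_eq_abs, abs_of_nonneg ht.1]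
    calc t * ‖G‖ ≤ 1 * ‖G‖ := mul_le_mul_of_nonneg_right ht.2 (norm_nonneg _)
      _ = ‖G‖ := one_mul _
  have hsV : ∀ x ∈ s, x ∈ V := fun x hx => hnearV x (hseg x hx)
  have hFs : F ∈ s := left_mem_segment ℝ F (F + G)
  have hFGs : F + G ∈ s := right_mem_segment ℝ F (F + G)
  -- Step 1: first-order Taylor bound for f on s
  have step1 : ∀ y ∈ s, ‖f y - f F - B₂ F (y - F)‖ ≤ ρ' * ‖y - F‖ := by
    intro y hy
    exact (convex_segment F (F + G)).norm_image_sub_le_of_norm_hasFDerivWithin_le'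
      (fun x hx => (hfd x (hsV x hx)).hasFDerivWithinAt)
      (fun x hx => hρ' x (hseg x hx)) hFs hy
  -- symmetry of B₂ F
  have hsymm : ∀ v w : E, B₂ F v w = B₂ F w v := by
    intro v w
    apply second_derivative_symmetric_of_eventually_of_real
      (f' := f) (f'' := B₂ F) (x := F)
    · filter_upwards [hsub F hFV] with y hy using hWd y hy
    · exact hfd F hFV
  -- Step 2: the auxiliary function h
  set h : E → ℝ := fun x => W x - (1/2) * (B₂ F (x - F)) (x - F) with hhdef
  have hder : ∀ x ∈ s, HasFDerivWithinAt h (f x - B₂ F (x - F)) s x := by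
    intro x hx
    have hu : HasFDerivAt (fun y : E => y - F) (ContinuousLinearMap.id ℝ E) x := by
      simpa using (hasFDerivAt_id x).sub_const F
    have hc : HasFDerivAt (fun y : E => B₂ F (y - F)) (B₂ F) x := by
      have hcc := (B₂ F).hasFDerivAt.comp x hu
      rw [ContinuousLinearMap.comp_id] at hcc
      exact hcc
    have hq : HasFDerivAt (fun y : E => (B₂ F (y - F)) (y - F))
        ((B₂ F (x - F)).comp (ContinuousLinearMap.id ℝ E) + (B₂ F).flip (x - F)) x :=
      hc.clm_apply hu
    have hW' : HasFDerivAt W (f x) x := hWd x (hsV x hx)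
    have hhd : HasFDerivAt h
        (f x - (1/2 : ℝ) • ((B₂ F (x - F)).comp (ContinuousLinearMap.id ℝ E)
          + (B₂ F).flip (x - F))) x := hW'.sub (hq.const_mul (1/2 : ℝ))
    have heq : f x - (1/2 : ℝ) • ((B₂ F (x - F)).comp (ContinuousLinearMap.id ℝ E)
        + (B₂ F).flip (x - F)) = f x - B₂ F (x - F) := by
      ext v
      simp only [ContinuousLinearMap.coe_sub', Pi.sub_apply,
        ContinuousLinearMap.coe_smul', Pi.smul_apply,
        ContinuousLinearMap.add_apply, ContinuousLinearMap.coe_comp',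
        Function.comp_apply, ContinuousLinearMap.coe_id', id_eq,
        ContinuousLinearMap.flip_apply, smul_eq_mul]
      rw [hsymm v (x - F)]
      ring
    rw [heq] at hhd
    exact hhd.hasFDerivWithinAt
  have hbound2 : ∀ x ∈ s, ‖(f x - B₂ F (x - F)) - f F‖ ≤ ρ' * ‖G‖ := by
    intro x hx
    have heq2 : (f x - B₂ F (x - F)) - f F = f x - f F - B₂ F (x - F) := by abel
    rw [heq2]
    calc ‖f x - f F - B₂ F (x - F)‖ ≤ ρ' * ‖x - F‖ := step1 x hx
      _ ≤ ρ' * ‖G‖ := mul_le_mul_of_nonneg_left (hseg x hx) hρ'0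
  have step2 : ‖h (F + G) - h F - f F ((F + G) - F)‖ ≤ (ρ' * ‖G‖) * ‖(F + G) - F‖ :=
    (convex_segment F (F + G)).norm_image_sub_le_of_norm_hasFDerivWithin_le'
      hder hbound2 hFs hFGs
  rw [add_sub_cancel_left] at step2
  have hhF : h F = W F := by simp [hhdef]
  have hhFG : h (F + G) = W (F + G) - (1/2) * (B₂ F G) G := by
    simp [hhdef, add_sub_cancel_left]
    ring
  rw [hhF, hhFG] at step2
  have hkey : W (F + G) ≤ W F + f F G + (1/2) * (B₂ F G) G + ρ' * ‖G‖ ^ 2 := by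
    have h5 := (abs_le.1 (by rwa [Real.norm_eq_abs] at step2)).2
    nlinarith [h5]
  -- final assembly
  have hiter : iteratedFDeriv ℝ 2 W F ![G, G] = (B₂ F G) G := by
    rw [iteratedFDeriv_two_apply]
    simp [hB₂def, hfdef]
  have hW0F : 0 ≤ W F := le_trans (by positivity) (hcoer F)
  have hfFG : f F G ≤ (L' / Real.sqrt c₁ + 1) * Real.sqrt (W F) * ‖G‖ := by
    have h1 : f F G ≤ ‖f F‖ * ‖G‖ := (le_abs_self _).trans ((f F).le_opNorm G)
    have h2 : ‖f F‖ ≤ L' * Metric.infDist F K := hfnorm F hFV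
    have hd0 : 0 ≤ Metric.infDist F K := Metric.infDist_nonneg
    have h3 : Real.sqrt c₁ * Metric.infDist F K ≤ Real.sqrt (W F) := by
      have hsq : Real.sqrt (c₁ * Metric.infDist F K ^ 2) ≤ Real.sqrt (W F) :=
        Real.sqrt_le_sqrt (hcoer F)
      rwa [Real.sqrt_mul hc1.le, Real.sqrt_sq hd0] at hsq
    have hsc : 0 < Real.sqrt c₁ := Real.sqrt_pos.2 hc1
    have h4 : L' * Metric.infDist F K ≤ (L' / Real.sqrt c₁ + 1) * Real.sqrt (W F) := by
      have h5 : L' * Metric.infDist F K ≤ (L' / Real.sqrt c₁) * Real.sqrt (W F) := by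
        rw [div_mul_eq_mul_div, le_div_iff₀ hsc]
        calc L' * Metric.infDist F K * Real.sqrt c₁
            = L' * (Real.sqrt c₁ * Metric.infDist F K) := by ring
          _ ≤ L' * Real.sqrt (W F) := mul_le_mul_of_nonneg_left h3 hL'0
      have h6 : 0 ≤ Real.sqrt (W F) := Real.sqrt_nonneg _
      nlinarith
    calc f F G ≤ ‖f F‖ * ‖G‖ := h1
      _ ≤ (L' / Real.sqrt c₁ + 1) * Real.sqrt (W F) * ‖G‖ :=
          mul_le_mul_of_nonneg_right (h2.trans h4) (norm_nonneg G)
  have hρρ' : ρ' ≤ (if δ ≤ δW / 4 then ω δ else 2 * L') + δ := by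
    rw [hρ'def]; linarith
  have hG2 : (0:ℝ) ≤ ‖G‖ ^ 2 := sq_nonneg _
  rw [hiter]
  nlinarith [hkey, hfFG, mul_le_mul_of_nonneg_right hρρ' hG2]

set_option maxHeartbeats 1000000 in
/-- if `W` is C² on `V = {dist(·, SO(d){A,B}) < δ_W}`, vanishes together with
its derivative on the wells, is coercive, and `DW` is Lipschitz on `V`, then there are
`C > 0` and `ρ_δ > 0` with `ρ_δ → 0` as `δ → 0` such that for `0 < δ ≤ δ_W/2`,
`W(F + G) ≤ W(F) + C √(W(F)) |G| + ½ D²W(F)[G,G] + ρ_δ |G|²`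
for all `F ∈ V_δ` and `|G| < δ`. -/
theorem stmt5 (n : ℕ) (κ c₁ L δW : ℝ) (hκ : 0 < κ) (hc1 : 0 < c₁) (hδW : 0 < δW)
    (A B : Matrix (Fin (n + 2)) (Fin (n + 2)) ℝ)
    (hA : A = 1)
    (hB : B = 1 + κ • Matrix.single (Fin.last (n + 1)) (Fin.last (n + 1)) 1)
    (K : Set (Matrix (Fin (n + 2)) (Fin (n + 2)) ℝ))
    (hK : K = (fun R => R * A) '' SO (n + 2) ∪ (fun R => R * B) '' SO (n + 2))
    (V : Set (Matrix (Fin (n + 2)) (Fin (n + 2)) ℝ))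
    (hV : V = {F | Metric.infDist F K < δW})
    (W : Matrix (Fin (n + 2)) (Fin (n + 2)) ℝ → ℝ)
    (hW0 : ∀ F, 0 ≤ W F)
    (hsmooth : ContDiffOn ℝ 2 W V)
    (hvan : ∀ F ∈ K, W F = 0)
    (hDvan : ∀ F ∈ K, fderiv ℝ W F = 0)
    (hcoer : ∀ F, c₁ * Metric.infDist F K ^ 2 ≤ W F)
    (hLip : ∀ F₁ ∈ V, ∀ F₂ ∈ V, ‖@fderiv ℝ _ _ _ _ PseudoMetricSpace.toUniformSpace.toTopologicalSpace _ _ _ _ W F₁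
      - @fderiv ℝ _ _ _ _ PseudoMetricSpace.toUniformSpace.toTopologicalSpace _ _ _ _ W F₂‖ ≤ L * ‖F₁ - F₂‖) :
    ∃ C : ℝ, 0 < C ∧ ∃ ρ : ℝ → ℝ,
      (∀ δ ∈ Set.Ioc (0 : ℝ) (δW / 2), 0 < ρ δ) ∧
      Tendsto ρ (𝓝[>] (0 : ℝ)) (𝓝 0) ∧
      ∀ δ ∈ Set.Ioc (0 : ℝ) (δW / 2),
        ∀ F, Metric.infDist F K < δ →
          ∀ G : Matrix (Fin (n + 2)) (Fin (n + 2)) ℝ, ‖G‖ < δ →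
            W (F + G) ≤ W F + C * Real.sqrt (W F) * ‖G‖
              + (1 / 2) * iteratedFDeriv ℝ 2 W F ![G, G] + ρ δ * ‖G‖ ^ 2 := by
  classical
  have hSOc : IsCompact (SO (n + 2)) := by
    apply Metric.isCompact_of_isClosed_isBounded
    · have h1 : IsClosed {R : Matrix (Fin (n + 2)) (Fin (n + 2)) ℝ | R * Rᵀ = 1} :=
        isClosed_eq (continuous_id.matrix_mul continuous_id.matrix_transpose) continuous_const
      have h2 : IsClosed {R : Matrix (Fin (n + 2)) (Fin (n + 2)) ℝ | R.det = 1} :=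
        isClosed_eq continuous_id.matrix_det continuous_const
      exact h1.inter h2
    · rw [Metric.isBounded_iff_subset_closedBall 0]
      refine ⟨((n:ℝ) + 2), fun R hR => ?_⟩
      have hrow : ∀ i, ∑ j, R i j * R i j = 1 := by
        intro i
        have h := congrFun (congrFun hR.1 i) i
        simpa [Matrix.mul_apply, Matrix.one_apply] using h
      have hsum : ∑ i, ∑ j, ‖R i j‖ ^ (2 : ℝ) = ((n:ℝ) + 2) := by
        have he : ∀ i j, ‖R i j‖ ^ (2 : ℝ) = R i j * R i j := by
          intro i j
          rw [Real.rpow_two, Real.norm_eq_abs, sq_abs, sq]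
        simp_rw [he, hrow]
        simp
      simp only [Metric.mem_closedBall, dist_zero_right]
      rw [Matrix.frobenius_norm_def, hsum, ← Real.sqrt_eq_rpow]
      nlinarith [Real.sq_sqrt (show (0:ℝ) ≤ (n:ℝ) + 2 by positivity),
        Real.sqrt_nonneg ((n:ℝ) + 2)]
  have hKc : IsCompact K := by
    rw [hK]
    exact (hSOc.image (continuous_id.matrix_mul continuous_const)).union
      (hSOc.image (continuous_id.matrix_mul continuous_const))
  have h1K : (1 : Matrix (Fin (n + 2)) (Fin (n + 2)) ℝ) ∈ K := by
    rw [hK]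
    exact Or.inl ⟨1, ⟨by simp, by simp⟩, by simp [hA]⟩
  exact stmt5_aux c₁ L δW hc1 hδW K hKc ⟨1, h1K⟩ V hV W hsmooth hDvan hcoer hLip
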